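/- There exists a unique positive real number γ such that γ·√3·cosh(πγ/2) = 8·sinh(πγ/6). -/

import Mathlib

open Real

noncomputable def qGamma (γ : ℝ) : ℝ :=
  γ * Real.sqrt 3 * Real.cosh (Real.pi * γ / 2) - 8 * Real.sinh (Real.pi * γ / 6)

noncomputable def qGamma' (γ : ℝ) : ℝ :=
  Real.sqrt 3 * Real.cosh (Real.pi * γ / 2)
    + γ * Real.sqrt 3 * (Real.pi / 2) * Real.sinh (Real.pi * γ / 2)
    - 8 * (Real.pi / 6) * Real.cosh (Real.pi * γ / 6)

noncomputable def qGamma'' (γ : ℝ) : ℝ :=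
  2 * Real.sqrt 3 * (Real.pi / 2) * Real.sinh (Real.pi * γ / 2)
    + γ * Real.sqrt 3 * (Real.pi / 2) ^ 2 * Real.cosh (Real.pi * γ / 2)
    - 8 * (Real.pi / 6) ^ 2 * Real.sinh (Real.pi * γ / 6)

lemma hasDerivAt_qGamma (x : ℝ) : HasDerivAt qGamma (qGamma' x) x := by
  have h1 : HasDerivAt (fun γ : ℝ => Real.pi * γ / 2) (Real.pi / 2) x := by
    simpa using ((hasDerivAt_id x).const_mul Real.pi).div_const 2
  have h2 : HasDerivAt (fun γ : ℝ => Real.pi * γ / 6) (Real.pi / 6) x := by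
    simpa using ((hasDerivAt_id x).const_mul Real.pi).div_const 6
  have hc : HasDerivAt (fun γ : ℝ => Real.cosh (Real.pi * γ / 2))
      (Real.sinh (Real.pi * x / 2) * (Real.pi / 2)) x :=
    (Real.hasDerivAt_cosh _).comp x h1
  have hs : HasDerivAt (fun γ : ℝ => Real.sinh (Real.pi * γ / 6))
      (Real.cosh (Real.pi * x / 6) * (Real.pi / 6)) x :=
    (Real.hasDerivAt_sinh _).comp x h2
  have hm : HasDerivAt (fun γ : ℝ => γ * Real.sqrt 3) (Real.sqrt 3) x := by
    simpa using (hasDerivAt_id x).mul_const (Real.sqrt 3)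
  have := (hm.mul hc).sub (hs.const_mul 8)
  refine this.congr_deriv ?_
  unfold qGamma'
  ring

lemma hasDerivAt_qGamma' (x : ℝ) : HasDerivAt qGamma' (qGamma'' x) x := by
  have h1 : HasDerivAt (fun γ : ℝ => Real.pi * γ / 2) (Real.pi / 2) x := by
    simpa using ((hasDerivAt_id x).const_mul Real.pi).div_const 2
  have h2 : HasDerivAt (fun γ : ℝ => Real.pi * γ / 6) (Real.pi / 6) x := by
    simpa using ((hasDerivAt_id x).const_mul Real.pi).div_const 6
  have hc : HasDerivAt (fun γ : ℝ => Real.cosh (Real.pi * γ / 2))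
      (Real.sinh (Real.pi * x / 2) * (Real.pi / 2)) x :=
    (Real.hasDerivAt_cosh _).comp x h1
  have hs : HasDerivAt (fun γ : ℝ => Real.sinh (Real.pi * γ / 2))
      (Real.cosh (Real.pi * x / 2) * (Real.pi / 2)) x :=
    (Real.hasDerivAt_sinh _).comp x h1
  have hc6 : HasDerivAt (fun γ : ℝ => Real.cosh (Real.pi * γ / 6))
      (Real.sinh (Real.pi * x / 6) * (Real.pi / 6)) x :=
    (Real.hasDerivAt_cosh _).comp x h2
  have hm : HasDerivAt (fun γ : ℝ => γ * Real.sqrt 3 * (Real.pi / 2))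
      (Real.sqrt 3 * (Real.pi / 2)) x := by
    simpa using ((hasDerivAt_id x).mul_const (Real.sqrt 3)).mul_const (Real.pi / 2)
  have := ((hc.const_mul (Real.sqrt 3)).add (hm.mul hs)).sub
    (hc6.const_mul (8 * (Real.pi / 6)))
  refine this.congr_deriv ?_
  unfold qGamma''
  ring

lemma qGamma''_pos {x : ℝ} (hx : 0 < x) : 0 < qGamma'' x := by
  unfold qGamma''
  have hpi : 3.141592 < Real.pi := Real.pi_gt_d6
  have hpi' : Real.pi < 3.15 := by linarith [Real.pi_lt_d2]
  have hs3 : 1.7 < Real.sqrt 3 := by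
    have h : (1.7 : ℝ) = Real.sqrt (1.7 ^ 2) := by
      rw [Real.sqrt_sq]; norm_num
    rw [h]
    apply Real.sqrt_lt_sqrt <;> norm_num
  have hmono : Real.sinh (Real.pi * x / 6) ≤ Real.sinh (Real.pi * x / 2) := by
    apply Real.sinh_le_sinh.2
    nlinarith
  have hsp : 0 < Real.sinh (Real.pi * x / 6) := Real.sinh_pos_iff.2 (by positivity)
  have hcp : (1 : ℝ) ≤ Real.cosh (Real.pi * x / 2) := Real.one_le_cosh _
  have h1 : 8 * (Real.pi / 6) ^ 2 * Real.sinh (Real.pi * x / 6)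
      < Real.sqrt 3 * Real.pi * Real.sinh (Real.pi * x / 6) := by
    nlinarith [mul_pos Real.pi_pos hsp]
  have h2 : Real.sqrt 3 * Real.pi * Real.sinh (Real.pi * x / 6)
      ≤ Real.sqrt 3 * Real.pi * Real.sinh (Real.pi * x / 2) := by
    apply mul_le_mul_of_nonneg_left hmono
    positivity
  have h3 : 0 < x * Real.sqrt 3 * (Real.pi / 2) ^ 2 * Real.cosh (Real.pi * x / 2) := by
    have hcpos : 0 < Real.cosh (Real.pi * x / 2) := Real.cosh_pos _
    positivity
  have e : 2 * Real.sqrt 3 * (Real.pi / 2) * Real.sinh (Real.pi * x / 2)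
      = Real.sqrt 3 * Real.pi * Real.sinh (Real.pi * x / 2) := by ring
  linarith

lemma strictConvex_qGamma : StrictConvexOn ℝ (Set.Ici (0 : ℝ)) qGamma := by
  apply strictConvexOn_of_deriv2_pos (convex_Ici 0)
  · apply Continuous.continuousOn
    unfold qGamma
    continuity
  · intro x hx
    rw [interior_Ici] at hx
    have hd1 : deriv qGamma = qGamma' := funext fun y => (hasDerivAt_qGamma y).deriv
    have h2 : (deriv^[2] qGamma) x = deriv (deriv qGamma) x := by
      simp [Function.iterate_succ, Function.iterate_one]
    rw [h2, hd1, (hasDerivAt_qGamma' x).deriv]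
    exact qGamma''_pos hx

lemma qGamma_zero : qGamma 0 = 0 := by simp [qGamma]

lemma qGamma_half_neg : qGamma (1 / 2) < 0 := by
  unfold qGamma
  have hpi : 3.141592 < Real.pi := Real.pi_gt_d6
  have hpi' : Real.pi < 3.15 := by linarith [Real.pi_lt_d2]
  have hs3 : Real.sqrt 3 < 1.8 := by
    have h2 : Real.sqrt 3 < Real.sqrt (1.8 ^ 2) := by
      apply Real.sqrt_lt_sqrt <;> norm_num
    rwa [Real.sqrt_sq (by norm_num)] at h2
  have hs3' : 0 < Real.sqrt 3 := Real.sqrt_pos.2 (by norm_num)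
  have hcosh : Real.cosh (Real.pi * (1 / 2) / 2) ≤ Real.cosh 1 := by
    apply Real.cosh_le_cosh.2
    rw [abs_of_nonneg (by positivity), abs_one]
    nlinarith
  have hcosh1 : Real.cosh 1 < 1.86 := by
    rw [Real.cosh_eq]
    have h1 : Real.exp 1 < 2.7182818286 := Real.exp_one_lt_d9
    have h2 : Real.exp (-1) < 1 := Real.exp_lt_one_iff.2 (by norm_num)
    norm_num
    linarith
  have hsinh : Real.pi * (1 / 2) / 6 < Real.sinh (Real.pi * (1 / 2) / 6) :=
    Real.self_lt_sinh_iff.2 (by positivity)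
  have hcosh0 : 0 < Real.cosh (Real.pi * (1 / 2) / 2) := Real.cosh_pos _
  nlinarith

lemma qGamma_four_pos : 0 < qGamma 4 := by
  unfold qGamma
  have hpi : (3 : ℝ) < Real.pi := Real.pi_gt_three
  have hs3 : 1 < Real.sqrt 3 := by
    have h : (1 : ℝ) = Real.sqrt 1 := (Real.sqrt_one).symm
    rw [h]
    apply Real.sqrt_lt_sqrt <;> norm_num
  have harg : Real.pi * 4 / 2 = Real.pi * 4 / 6 + Real.pi * 4 / 3 := by ring
  have hadd : Real.cosh (Real.pi * 4 / 2)
      = Real.cosh (Real.pi * 4 / 6) * Real.cosh (Real.pi * 4 / 3)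
        + Real.sinh (Real.pi * 4 / 6) * Real.sinh (Real.pi * 4 / 3) := by
    rw [harg, Real.cosh_add]
  have hsp : 0 < Real.sinh (Real.pi * 4 / 6) := Real.sinh_pos_iff.2 (by positivity)
  have hsb : (4 : ℝ) < Real.sinh (Real.pi * 4 / 3) := by
    have h1 : Real.pi * 4 / 3 < Real.sinh (Real.pi * 4 / 3) :=
      Real.self_lt_sinh_iff.2 (by positivity)
    nlinarith
  have hc1 : 0 < Real.cosh (Real.pi * 4 / 6) := Real.cosh_pos _
  have hc2 : 0 < Real.cosh (Real.pi * 4 / 3) := Real.cosh_pos _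
  have hcosh2 : 4 * Real.sinh (Real.pi * 4 / 6) < Real.cosh (Real.pi * 4 / 2) := by
    rw [hadd]
    nlinarith [mul_pos hc1 hc2]
  have hc0 : 0 < Real.cosh (Real.pi * 4 / 2) := Real.cosh_pos _
  nlinarith [mul_lt_mul_of_pos_left hs3 hc0]

theorem exists_unique_gamma0 :
    ∃! γ : ℝ, 0 < γ ∧
      γ * Real.sqrt 3 * Real.cosh (Real.pi * γ / 2) = 8 * Real.sinh (Real.pi * γ / 6) := by
  have key : ∀ x y : ℝ, 0 < x → x < y → qGamma x = 0 → qGamma y = 0 → False := by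
    intro x y hx hxy hqx hqy
    have hy : 0 < y := lt_trans hx hxy
    have h0 : (0 : ℝ) ∈ Set.Ici (0 : ℝ) := Set.self_mem_Ici
    have hyS : y ∈ Set.Ici (0 : ℝ) := le_of_lt hy
    have ha : 0 < 1 - x / y := by
      have : x / y < 1 := (div_lt_one hy).2 hxy
      linarith
    have hb : 0 < x / y := div_pos hx hy
    have hsum : (1 - x / y) + x / y = 1 := by ring
    have hne : (0 : ℝ) ≠ y := ne_of_lt hy
    have hlt := strictConvex_qGamma.2 h0 hyS hne ha hb hsum
    have hcomb : (1 - x / y) • (0 : ℝ) + (x / y) • y = x := by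
      field_simp
      simp [hy.ne']
    rw [hcomb, hqx, qGamma_zero, hqy] at hlt
    simp at hlt
  -- existence of a root in [1/2, 4]
  have hcont : ContinuousOn qGamma (Set.Icc (1 / 2 : ℝ) 4) := by
    apply Continuous.continuousOn
    unfold qGamma
    continuity
  have hmem : (0 : ℝ) ∈ Set.Icc (qGamma (1 / 2)) (qGamma 4) :=
    ⟨le_of_lt qGamma_half_neg, le_of_lt qGamma_four_pos⟩
  obtain ⟨γ₀, hγ₀mem, hγ₀⟩ := intermediate_value_Icc (by norm_num : (1 / 2 : ℝ) ≤ 4)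
    hcont hmem
  have hγ₀pos : 0 < γ₀ := lt_of_lt_of_le (by norm_num) hγ₀mem.1
  refine ⟨γ₀, ⟨hγ₀pos, by have := hγ₀; unfold qGamma at this; linarith⟩, ?_⟩
  rintro y ⟨hy, hyeq⟩
  have hqy : qGamma y = 0 := by unfold qGamma; linarith
  rcases lt_trichotomy y γ₀ with h | h | h
  · exact (key y γ₀ hy h hqy hγ₀).elim
  · exact h
  · exact (key γ₀ y hγ₀pos h hγ₀ hqy).elim
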